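/- For the yield set K = {(Σ, g) : ‖dev Σ‖ + g ≤ σ₀, g ≤ 0} with σ₀ > 0, suppose (Σ_E, g) ∈ K with dev Σ_E ≠ 0 and ‖dev Σ_E‖ + g = σ₀, g < 0. If the pair (ε̇, η̇) (with ε̇ ∈ Sym(3) ∩ sl(3), η̇ ∈ ℝ) lies in the normal cone N_K(Σ_E, g), then there exists λ ≥ 0 with ε̇ = λ dev Σ_E/‖dev Σ_E‖ and η̇ = λ = ‖ε̇‖. -/

import Mathlib

open Matrix

noncomputable section

abbrev M3 := Matrix (Fin 3) (Fin 3) ℝ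

/-- Frobenius inner product ⟨A,B⟩ = tr(ABᵀ). -/
def frob (A B : M3) : ℝ := (A * Bᵀ).trace

/-- Frobenius norm. -/
def frobNorm (A : M3) : ℝ := Real.sqrt (frob A A)

/-- Deviatoric part dev A = A - (tr A / 3) Id. -/
def dev (A : M3) : M3 := A - (A.trace / 3) • (1 : M3)

lemma frob_sum (A B : M3) : frob A B = ∑ i, ∑ j, A i j * B i j := by
  simp [frob, Matrix.trace, Matrix.diag, Matrix.mul_apply]

lemma frob_comm (A B : M3) : frob A B = frob B A := by
  simp [frob_sum, mul_comm]

lemma frob_add_right (A B C : M3) : frob A (B + C) = frob A B + frob A C := by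
  simp [frob_sum, mul_add, Finset.sum_add_distrib]

lemma frob_sub_right (A B C : M3) : frob A (B - C) = frob A B - frob A C := by
  simp [frob_sum, mul_sub, Finset.sum_sub_distrib]

lemma frob_smul_right (c : ℝ) (A B : M3) : frob A (c • B) = c * frob A B := by
  simp [frob_sum, Finset.mul_sum, mul_left_comm]

lemma frob_smul_left (c : ℝ) (A B : M3) : frob (c • A) B = c * frob A B := by
  rw [frob_comm, frob_smul_right, frob_comm]

lemma frob_sub_left (A B C : M3) : frob (A - B) C = frob A C - frob B C := by
  rw [frob_comm, frob_sub_right, frob_comm, frob_comm C B]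

lemma frob_add_left (A B C : M3) : frob (A + B) C = frob A C + frob B C := by
  rw [frob_comm, frob_add_right, frob_comm, frob_comm C B]

lemma frob_self_nonneg (A : M3) : 0 ≤ frob A A := by
  rw [frob_sum]
  exact Finset.sum_nonneg fun i _ => Finset.sum_nonneg fun j _ => mul_self_nonneg _

lemma frob_self_eq_zero {A : M3} (h : frob A A = 0) : A = 0 := by
  ext i j
  have h1 : ∀ k, (0:ℝ) ≤ ∑ l, A k l * A k l :=
    fun k => Finset.sum_nonneg fun l _ => mul_self_nonneg _
  have h2 : (∑ l, A i l * A i l) ≤ frob A A := by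
    rw [frob_sum]
    exact Finset.single_le_sum (fun k _ => h1 k) (Finset.mem_univ i)
  have h3 : A i j * A i j ≤ ∑ l, A i l * A i l :=
    Finset.single_le_sum (fun l _ => mul_self_nonneg (A i l)) (Finset.mem_univ j)
  have h4 : A i j * A i j ≤ 0 := by rw [h] at h2; linarith
  have h5 := mul_self_nonneg (A i j)
  simp only [Matrix.zero_apply]
  nlinarith

lemma frob_one_right (A : M3) : frob A 1 = A.trace := by
  simp [frob]

lemma frob_zero_right (A : M3) : frob A 0 = 0 := by
  simp [frob]

lemma trace_dev (A : M3) : (dev A).trace = 0 := by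
  simp [dev, Matrix.trace_sub, Matrix.trace_smul]

lemma dev_of_trace_zero {A : M3} (h : A.trace = 0) : dev A = A := by
  simp [dev, h]

lemma frob_dev_right {A : M3} (hA : A.trace = 0) (S : M3) : frob A (dev S) = frob A S := by
  rw [dev, frob_sub_right, frob_smul_right, frob_one_right, hA]
  ring

lemma frobNorm_smul (c : ℝ) (A : M3) : frobNorm (c • A) = |c| * frobNorm A := by
  unfold frobNorm
  rw [frob_smul_left, frob_smul_right, ← mul_assoc, ← sq]
  rw [Real.sqrt_mul (sq_nonneg c), Real.sqrt_sq_eq_abs]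

theorem stmt_14 (σ₀ : ℝ) (hσ₀ : 0 < σ₀) (SE : M3) (g : ℝ)
    (hdev : dev SE ≠ 0) (hbdry : frobNorm (dev SE) + g = σ₀) (hg : g < 0)
    (εdot : M3) (hεsym : εdotᵀ = εdot) (hεtr : εdot.trace = 0) (ηdot : ℝ)
    (hNC : ∀ (S : M3) (g' : ℝ), frobNorm (dev S) + g' ≤ σ₀ → g' ≤ 0 →
      frob εdot (S - SE) + ηdot * (g' - g) ≤ 0) :
    ∃ lam : ℝ, 0 ≤ lam ∧ εdot = (lam / frobNorm (dev SE)) • dev SE ∧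
      ηdot = lam ∧ lam = frobNorm εdot := by
  set n : M3 := dev SE with hn
  clear_value n
  set r : ℝ := frobNorm n with hr
  clear_value r
  have hrval : r = σ₀ - g := by linarith [hbdry]
  have hrpos : 0 < r := by linarith
  have hrn : frob n n = r ^ 2 := by
    rw [hr, frobNorm]
    exact (Real.sq_sqrt (frob_self_nonneg n)).symm
  have htrn : n.trace = 0 := by rw [hn]; exact trace_dev SE
  have hfSE : frob εdot SE = frob εdot n := by
    rw [hn, frob_dev_right hεtr SE]
  set P : ℝ := frob εdot n with hP
  clear_value P
  -- Step A: ηdot ≥ 0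
  have hη : 0 ≤ ηdot := by
    have hA := hNC SE (2 * g) (by rw [← hn, ← hr]; linarith) (by linarith)
    rw [sub_self, frob_zero_right] at hA
    nlinarith
  -- Step C1: P ≤ ηdot * r
  have hC1 : P ≤ ηdot * r := by
    have ht2 : ((2:ℝ) • n).trace = 0 := by rw [Matrix.trace_smul, htrn]; simp
    have hfeas : frobNorm (dev ((2:ℝ) • n)) + (g - r) ≤ σ₀ := by
      rw [dev_of_trace_zero ht2, frobNorm_smul,
        abs_of_nonneg (by norm_num : (0:ℝ) ≤ 2), ← hr]
      linarith
    have hA := hNC ((2:ℝ) • n) (g - r) hfeas (by linarith)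
    rw [frob_sub_right, frob_smul_right, hfSE, ← hP] at hA
    nlinarith
  -- Step C2: ηdot * r ≤ P
  have hC2 : ηdot * r ≤ P := by
    set c : ℝ := g / r with hc
    have hcr : c * r = g := div_mul_cancel₀ g hrpos.ne'
    have hcneg : c < 0 := div_neg_of_neg_of_pos hg hrpos
    have hc1 : 0 ≤ 1 + c := by
      have : -1 ≤ c := by rw [hc, le_div_iff₀ hrpos]; linarith
      linarith
    have ht2 : (((1:ℝ) + c) • n).trace = 0 := by rw [Matrix.trace_smul, htrn]; simp
    have hfeas : frobNorm (dev (((1:ℝ) + c) • n)) + (0:ℝ) ≤ σ₀ := by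
      rw [dev_of_trace_zero ht2, frobNorm_smul, abs_of_nonneg hc1, ← hr]
      nlinarith
    have hA := hNC (((1:ℝ) + c) • n) 0 hfeas le_rfl
    rw [frob_sub_right, frob_smul_right, hfSE, ← hP] at hA
    -- hA : (1+c)*P - P + ηdot*(0-g) ≤ 0, i.e. c*P ≤ ηdot*g = ηdot*c*r
    nlinarith [hA, hcr, hcneg]
  have hPr : P = ηdot * r := le_antisymm hC1 hC2
  -- Step D: the residual E vanishes
  set E : M3 := εdot - (ηdot / r) • n with hE
  clear_value E
  have htrE : E.trace = 0 := by
    rw [hE, Matrix.trace_sub, Matrix.trace_smul, hεtr, htrn]; simp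
  set e2 : ℝ := frob E E with he2
  clear_value e2
  have he2nn : 0 ≤ e2 := by rw [he2]; exact frob_self_nonneg E
  have hfnE : frob n E = 0 := by
    rw [hE, frob_sub_right, frob_smul_right, hrn, frob_comm n εdot, ← hP, hPr]
    field_simp
    ring
  have hfεE : frob εdot E = e2 := by
    have : frob E E = frob εdot E - (ηdot / r) * frob n E := by
      rw [hE]
      rw [frob_sub_left, frob_smul_left]
    rw [he2, this, hfnE]; ring
  have hεε : frob εdot εdot = e2 + ηdot ^ 2 := by
    have h1 : frob εdot E = frob εdot εdot - (ηdot / r) * P := by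
      rw [hE, frob_sub_right, frob_smul_right, ← hP]
    have h2 : (ηdot / r) * P = ηdot ^ 2 := by
      rw [hPr]; field_simp
    rw [h1, h2] at hfεE
    linarith
  -- test point D = s • (n + t • E)
  set t : ℝ := r / (ηdot + 1) with htdef
  clear_value t
  have htpos : 0 < t := by
    rw [htdef]; exact div_pos hrpos (by linarith)
  have hηt : ηdot * t < r := by
    rw [htdef, mul_div_assoc'] 
    rw [div_lt_iff₀ (by linarith : (0:ℝ) < ηdot + 1)]
    nlinarith
  set d : ℝ := r ^ 2 + t ^ 2 * e2 with hd
  clear_value d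
  have hdpos : 0 < d := by rw [hd]; nlinarith [sq_nonneg t, sq_nonneg r]
  have hdge : r ^ 2 ≤ d := by rw [hd]; nlinarith [sq_nonneg t]
  set s : ℝ := r ^ 2 / d with hs
  clear_value s
  set D : M3 := s • (n + t • E) with hD
  clear_value D
  have htrD : D.trace = 0 := by
    rw [hD, Matrix.trace_smul, Matrix.trace_add, Matrix.trace_smul, htrn, htrE]; simp
  have hDD : frob D D = s ^ 2 * d := by
    rw [hD, frob_smul_left, frob_smul_right, frob_add_left, frob_add_right,
      frob_add_right, frob_smul_left, frob_smul_right, frob_smul_left,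
      frob_smul_right, frob_comm E n, hfnE, hrn, ← he2, hd]
    ring
  have hDDle : frob D D ≤ r ^ 2 := by
    rw [hDD, hs]
    rw [div_pow, div_mul_eq_mul_div, div_le_iff₀ (pow_pos hdpos 2)]
    calc (r ^ 2) ^ 2 * d = r ^ 2 * d * r ^ 2 := by ring
      _ ≤ r ^ 2 * d * d :=
        mul_le_mul_of_nonneg_left hdge (mul_nonneg (sq_nonneg r) hdpos.le)
      _ = r ^ 2 * d ^ 2 := by ring
  have hND : frobNorm D ≤ r := by
    rw [frobNorm]
    calc Real.sqrt (frob D D) ≤ Real.sqrt (r ^ 2) := Real.sqrt_le_sqrt hDDle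
      _ = r := Real.sqrt_sq hrpos.le
  have hfeasD : frobNorm (dev D) + g ≤ σ₀ := by
    rw [dev_of_trace_zero htrD]
    linarith
  have hA := hNC D g hfeasD hg.le
  have hfεD : frob εdot D = s * (ηdot * r + t * e2) := by
    rw [hD, frob_smul_right, frob_add_right, frob_smul_right, ← hP, hPr, hfεE]
  rw [sub_self, mul_zero, add_zero, frob_sub_right, hfSE, hfεD] at hA
  -- hA : s * (ηdot * r + t * e2) - P ≤ 0
  have key : r ^ 2 * (ηdot * r + t * e2) ≤ ηdot * r * d := by
    have h1 : s * (ηdot * r + t * e2) ≤ ηdot * r := by linarith [hPr]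
    rw [hs, div_mul_eq_mul_div, div_le_iff₀ hdpos] at h1
    linarith [h1]
  have key2 : e2 * (r * t * (r - ηdot * t)) ≤ 0 := by
    rw [hd] at key
    have hexp : e2 * (r * t * (r - ηdot * t)) =
        r ^ 2 * (ηdot * r + t * e2) - ηdot * r * (r ^ 2 + t ^ 2 * e2) := by ring
    rw [hexp]; linarith
  have hprodpos : 0 < r * t * (r - ηdot * t) :=
    mul_pos (mul_pos hrpos htpos) (by linarith)
  have he2z : e2 = 0 := by
    refine le_antisymm ?_ he2nn
    by_contra h
    push_neg at h
    have := mul_pos h hprodpos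
    linarith
  have hEz : E = 0 := frob_self_eq_zero (by rw [← he2, he2z])
  have hεeq : εdot = (ηdot / r) • n := by
    rw [hE] at hEz
    exact sub_eq_zero.mp hEz
  refine ⟨ηdot, hη, hεeq, rfl, ?_⟩
  have hεε2 : frob εdot εdot = ηdot ^ 2 := by
    rw [hεε, he2z]; ring
  rw [frobNorm, hεε2, Real.sqrt_sq hη]
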